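/- (Gluing lemma for masked plans.) Let p, r, q ∈ Σ_m and let M ∈ {0,1}^{m×m} be the mask matrix of the keypoint pair set K = {(i,i) : i ∈ I}. Let π₁ ∈ Π(p,r;M) and π₂ ∈ Π(r,q;M). Define r̃ ∈ ℝ^m by r̃_k = r_k if r_k > 0 and r̃_k = 1 otherwise, and set γ = (M⊙π₁)·diag(1/r̃)·(M⊙π₂). Then γ ≥ 0 entrywise, γ1_m = p, γ^T 1_m = q, and γ_{i,j} = 0 whenever M_{i,j} = 0; consequently M⊙γ = γ and γ ∈ Π(p,q;M). -/
import Mathlib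


open Finset

noncomputable section

variable {m : ℕ}

/-- Mask matrix for the keypoint pair set `K = {(i,i) : i ∈ I}`. -/
def maskI (I : Finset (Fin m)) : Matrix (Fin m) (Fin m) ℝ :=
  fun i j => if i = j ∧ i ∈ I then 1 else if i ∈ I ∨ j ∈ I then 0 else 1

/-- The masked feasible set `Π(p, q; M)`. -/
def PiM (M : Matrix (Fin m) (Fin m) ℝ) (p q : Fin m → ℝ) :
    Set (Matrix (Fin m) (Fin m) ℝ) :=
  {π | (∀ i j, 0 ≤ π i j) ∧ (∀ i, ∑ j, M i j * π i j = p i) ∧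
    (∀ j, ∑ i, M i j * π i j = q j)}

/-- The relation vector of the point `x k` to the keypoints indexed by `I`,
computed with temperature `τ`. -/
def rel {X : Type*} [MetricSpace X] (x : Fin m → X) (I : Finset (Fin m)) (τ : ℝ)
    (k : Fin m) : ↥I → ℝ :=
  fun u => Real.exp (-(dist (x k) (x u)) / τ) /
    ∑ u' : ↥I, Real.exp (-(dist (x k) (x u')) / τ)

/-- The keypoint-guided KP objective
`Σ_{i,j} M_{i,j} π_{i,j} (α c(x_i, y_j) + (1−α) d(R^s_i, R^t_j))`. -/
def krkObj {X : Type*} [MetricSpace X] (x y : Fin m → X) (I : Finset (Fin m))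
    (τ τ' α : ℝ) (d : (↥I → ℝ) → (↥I → ℝ) → ℝ)
    (π : Matrix (Fin m) (Fin m) ℝ) : ℝ :=
  ∑ i, ∑ j, maskI I i j * π i j *
    (α * dist (x i) (y j) + (1 - α) * d (rel x I τ i) (rel y I τ' j))

/-- `S_krk(p,q)`: the optimal value of the keypoint-guided KP problem. -/
def Skrk {X : Type*} [MetricSpace X] (x y : Fin m → X) (I : Finset (Fin m))
    (τ τ' α : ℝ) (d : (↥I → ℝ) → (↥I → ℝ) → ℝ) (p q : Fin m → ℝ) : ℝ :=
  sInf {v | ∃ π ∈ PiM (maskI I) p q, v = krkObj x y I τ τ' α d π}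

/-- Gluing lemma for masked plans: gluing `π₁ ∈ Π(p,r;M)` and
`π₂ ∈ Π(r,q;M)` through the middle marginal `r` produces a nonnegative matrix `γ`
with row sums `p`, column sums `q`, vanishing wherever the mask vanishes; hence
`M ⊙ γ = γ` and `γ ∈ Π(p,q;M)`. -/
theorem masked_gluing
    (p r q : Fin m → ℝ) (I : Finset (Fin m))
    (hps : p ∈ stdSimplex ℝ (Fin m)) (hrs : r ∈ stdSimplex ℝ (Fin m))
    (hqs : q ∈ stdSimplex ℝ (Fin m))
    (π₁ π₂ : Matrix (Fin m) (Fin m) ℝ)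
    (hπ₁ : π₁ ∈ PiM (maskI I) p r) (hπ₂ : π₂ ∈ PiM (maskI I) r q)
    (rt : Fin m → ℝ) (hrt : ∀ k, rt k = if 0 < r k then r k else 1)
    (γ : Matrix (Fin m) (Fin m) ℝ)
    (hγ : ∀ i j, γ i j
      = ∑ k, (maskI I i k * π₁ i k) * (1 / rt k) * (maskI I k j * π₂ k j)) :
    (∀ i j, 0 ≤ γ i j)
    ∧ (∀ i, ∑ j, γ i j = p i)
    ∧ (∀ j, ∑ i, γ i j = q j)
    ∧ (∀ i j, maskI I i j = 0 → γ i j = 0)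
    ∧ (∀ i j, maskI I i j * γ i j = γ i j)
    ∧ γ ∈ PiM (maskI I) p q := by
  obtain ⟨h1pos, h1row, h1col⟩ := hπ₁
  obtain ⟨h2pos, h2row, h2col⟩ := hπ₂
  have hmask01 : ∀ i j : Fin m, maskI I i j = 0 ∨ maskI I i j = 1 := by
    intro i j; unfold maskI; split_ifs <;> simp
  have hmasknn : ∀ i j : Fin m, 0 ≤ maskI I i j := by
    intro i j; rcases hmask01 i j with h | h <;> rw [h] <;> norm_num
  have hrtpos : ∀ k, 0 < rt k := by
    intro k; rw [hrt k]; split_ifs with h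
    · exact h
    · exact one_pos
  have hAnn : ∀ i k, 0 ≤ maskI I i k * π₁ i k := fun i k =>
    mul_nonneg (hmasknn i k) (h1pos i k)
  have hBnn : ∀ k j, 0 ≤ maskI I k j * π₂ k j := fun k j =>
    mul_nonneg (hmasknn k j) (h2pos k j)
  have hr0 : ∀ k, ¬ 0 < r k → r k = 0 := fun k h =>
    le_antisymm (not_lt.mp h) (hrs.1 k)
  have hA0 : ∀ k, r k = 0 → ∀ i, maskI I i k * π₁ i k = 0 := by
    intro k hk i
    exact (Finset.sum_eq_zero_iff_of_nonneg (fun x _ => hAnn x k)).mp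
      (by rw [h1col k, hk]) i (Finset.mem_univ i)
  have hB0 : ∀ k, r k = 0 → ∀ j, maskI I k j * π₂ k j = 0 := by
    intro k hk j
    exact (Finset.sum_eq_zero_iff_of_nonneg (fun x _ => hBnn k x)).mp
      (by rw [h2row k, hk]) j (Finset.mem_univ j)
  have hnn : ∀ i j, 0 ≤ γ i j := by
    intro i j; rw [hγ]
    refine Finset.sum_nonneg fun k _ => ?_
    have hk := hrtpos k
    exact mul_nonneg (mul_nonneg (hAnn i k) (by positivity)) (hBnn k j)
  have hrow : ∀ i, ∑ j, γ i j = p i := by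
    intro i
    have : ∑ j, γ i j
        = ∑ k, (maskI I i k * π₁ i k) * (1 / rt k) * r k := by
      rw [Finset.sum_congr rfl fun j (_ : j ∈ Finset.univ) => hγ i j,
        Finset.sum_comm]
      refine Finset.sum_congr rfl fun k _ => ?_
      rw [← Finset.mul_sum, h2row k]
    rw [this, ← h1row i]
    refine Finset.sum_congr rfl fun k _ => ?_
    by_cases h : 0 < r k
    · rw [hrt k, if_pos h]
      field_simp
    · rw [hr0 k h, hA0 k (hr0 k h) i]; ring
  have hcol : ∀ j, ∑ i, γ i j = q j := by
    intro j
    have : ∑ i, γ i j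
        = ∑ k, r k * ((1 / rt k) * (maskI I k j * π₂ k j)) := by
      rw [Finset.sum_congr rfl fun i (_ : i ∈ Finset.univ) => hγ i j,
        Finset.sum_comm]
      refine Finset.sum_congr rfl fun k _ => ?_
      rw [← h1col k, Finset.sum_mul]
      exact Finset.sum_congr rfl fun i _ => by ring
    rw [this, ← h2col j]
    refine Finset.sum_congr rfl fun k _ => ?_
    by_cases h : 0 < r k
    · rw [hrt k, if_pos h]
      field_simp
    · rw [hr0 k h, hB0 k (hr0 k h) j]; ring
  have hne : ∀ a b : Fin m, maskI I a b ≠ 0 → (a = b ∧ a ∈ I) ∨ (a ∉ I ∧ b ∉ I) := by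
    intro a b h; unfold maskI at h; split_ifs at h with h1 h2
    · exact Or.inl h1
    · exact absurd rfl h
    · push_neg at h2; exact Or.inr h2
  have hz : ∀ i j, maskI I i j = 0 → γ i j = 0 := by
    intro i j hM
    rw [hγ]
    refine Finset.sum_eq_zero fun k _ => ?_
    by_cases hA : maskI I i k = 0
    · simp [hA]
    by_cases hB : maskI I k j = 0
    · simp [hB]
    exfalso
    rcases hne i k hA with ⟨hik, hiI⟩ | ⟨hiI, hkI⟩ <;>
      rcases hne k j hB with ⟨hkj, hkI'⟩ | ⟨hkI', hjI⟩
    · subst hik; subst hkj; unfold maskI at hM; simp [hiI] at hM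
    · subst hik; exact hkI' hiI
    · exact hkI hkI'
    · unfold maskI at hM; simp [hiI, hjI] at hM
  have hMg : ∀ i j, maskI I i j * γ i j = γ i j := by
    intro i j
    rcases hmask01 i j with h | h
    · rw [h, hz i j h]; ring
    · rw [h, one_mul]
  refine ⟨hnn, hrow, hcol, hz, hMg, hnn, fun i => ?_, fun j => ?_⟩
  · rw [Finset.sum_congr rfl fun j (_ : j ∈ Finset.univ) => hMg i j]; exact hrow i
  · rw [Finset.sum_congr rfl fun i (_ : i ∈ Finset.univ) => hMg i j]; exact hcol j
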